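/- Let a, b be real numbers with a > -1, -1 < b < 0 and |b| < 1 + a, and let β satisfy 1+b < β < 1. Then there exists a constant C > 0, depending only on a, b, β, such that for all r > 0, ε > 0 and s > r + ε: 0 ≤ R_{a,b}(s, r+ε) - R_{a,b}(s, r) ≤ C · ε^β · ( max(r^a, s^a) · (s-r)^{1+b-β} + (r+ε)^{1+a+b-β} ). (The middle quantity equals E[B^{a,b}_s (B^{a,b}_{r+ε} - B^{a,b}_r)].) -/

import Mathlib

open Real MeasureTheory

/-- The Euler Beta function. -/
noncomputable def Beta (x y : ℝ) : ℝ := Real.Gamma x * Real.Gamma y / Real.Gamma (x + y)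

/-- The covariance function `R_{a,b}(t,s)` of the weighted fractional Brownian motion. -/
noncomputable def R (a b t s : ℝ) : ℝ :=
  (1 / (2 * Beta (a + 1) (b + 1))) *
    ∫ u in (0:ℝ)..(min t s), u ^ a * ((t - u) ^ b + (s - u) ^ b)

lemma Beta_pos {x y : ℝ} (hx : 0 < x) (hy : 0 < y) : 0 < Beta x y :=
  div_pos (mul_pos (Real.Gamma_pos_of_pos hx) (Real.Gamma_pos_of_pos hy))
    (Real.Gamma_pos_of_pos (by linarith))

lemma betaIntegral_eq (x y : ℝ) (hx : 0 < x) (hy : 0 < y) :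
    Complex.betaIntegral x y = (Beta x y : ℂ) := by
  have h := Complex.Gamma_mul_Gamma_eq_betaIntegral (s := (x : ℂ)) (t := (y : ℂ))
    (by simpa using hx) (by simpa using hy)
  have hxy : Complex.Gamma ((x : ℂ) + y) = (Real.Gamma (x + y) : ℂ) := by
    rw [← Complex.ofReal_add, Complex.Gamma_ofReal]
  have hne : (Real.Gamma (x + y) : ℂ) ≠ 0 := by
    exact_mod_cast (Real.Gamma_pos_of_pos (by linarith : (0:ℝ) < x + y)).ne'
  rw [hxy] at h
  rw [eq_comm, Beta]
  push_cast
  rw [← Complex.Gamma_ofReal, ← Complex.Gamma_ofReal, div_eq_iff hne, mul_comm _ ((Real.Gamma (x+y) : ℂ)), ← h]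

lemma integral_beta_scaled (a b T : ℝ) (ha : -1 < a) (hb : -1 < b) (hT : 0 < T) :
    ∫ u in (0:ℝ)..T, u ^ a * (T - u) ^ b = T ^ (a + b + 1) * Beta (a + 1) (b + 1) := by
  have key := Complex.betaIntegral_scaled (((a:ℝ) + 1 : ℝ) : ℂ) (((b:ℝ) + 1 : ℝ) : ℂ) hT
  have h1 : (((a:ℝ) + 1 : ℝ) : ℂ) - 1 = (a : ℂ) := by push_cast; ring
  have h2 : (((b:ℝ) + 1 : ℝ) : ℂ) - 1 = (b : ℂ) := by push_cast; ring
  have h3 : (((a:ℝ) + 1 : ℝ) : ℂ) + (((b:ℝ) + 1 : ℝ) : ℂ) - 1 = ((a + b + 1 : ℝ) : ℂ) := by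
    push_cast; ring
  rw [h1, h2, h3] at key
  have lhs : ((∫ u in (0:ℝ)..T, u ^ a * (T - u) ^ b : ℝ) : ℂ)
      = ∫ x in (0:ℝ)..T, (x : ℂ) ^ (a : ℂ) * ((T : ℂ) - x) ^ (b : ℂ) := by
    rw [← intervalIntegral.integral_ofReal]
    refine intervalIntegral.integral_congr fun x hx => ?_
    rw [Set.uIcc_of_le hT.le] at hx
    rw [Complex.ofReal_mul, Complex.ofReal_cpow hx.1,
      Complex.ofReal_cpow (by linarith [hx.2] : (0:ℝ) ≤ T - x), Complex.ofReal_sub]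
  have rhs : ((T ^ (a + b + 1) * Beta (a + 1) (b + 1) : ℝ) : ℂ)
      = (T : ℂ) ^ ((a + b + 1 : ℝ) : ℂ) * Complex.betaIntegral (((a:ℝ) + 1 : ℝ) : ℂ) (((b:ℝ) + 1 : ℝ) : ℂ) := by
    rw [betaIntegral_eq _ _ (by linarith) (by linarith), Complex.ofReal_mul,
      Complex.ofReal_cpow hT.le]
  exact_mod_cast lhs.trans (key.trans rhs.symm)

lemma integrable_beta (a b T : ℝ) (ha : -1 < a) (hb : -1 < b) (hT : 0 < T) :
    IntervalIntegrable (fun u => u ^ a * (T - u) ^ b) volume 0 T := by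
  have h1 : IntervalIntegrable (fun u => u ^ a * (T - u) ^ b) volume 0 (T / 2) := by
    apply (intervalIntegral.intervalIntegrable_rpow' (by linarith)).mul_continuousOn
    apply ContinuousOn.rpow_const (by fun_prop)
    intro x hx
    rw [Set.uIcc_of_le (by linarith)] at hx
    left; have := hx.2; intro h; nlinarith [h]
  have h2 : IntervalIntegrable (fun u => (T - u) ^ b * u ^ a) volume (T / 2) T := by
    have base : IntervalIntegrable (fun x : ℝ => x ^ b) volume 0 (T / 2) :=
      intervalIntegral.intervalIntegrable_rpow' (by linarith)
    have hc := (base.comp_sub_left T)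
    rw [sub_zero, (by ring : T - T / 2 = T / 2)] at hc
    have h2' : IntervalIntegrable (fun u => (T - u) ^ b) volume (T / 2) T := hc.symm
    apply h2'.mul_continuousOn
    apply ContinuousOn.rpow_const (by fun_prop)
    intro x hx
    rw [Set.uIcc_of_le (by linarith)] at hx
    left; intro h; nlinarith [hx.1]
  have h2'' : IntervalIntegrable (fun u => u ^ a * (T - u) ^ b) volume (T / 2) T := by
    simpa [mul_comm] using h2
  exact h1.trans h2''

lemma concave_bound {x y θ : ℝ} (hy : 0 < y) (hxy : y ≤ x) (hθ0 : 0 ≤ θ) (hθ1 : θ ≤ 1) :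
    x ^ θ - y ^ θ ≤ θ * y ^ (θ - 1) * (x - y) := by
  have hs : (-1:ℝ) ≤ (x - y) / y := by
    have : (0:ℝ) ≤ (x - y) / y := div_nonneg (by linarith) hy.le
    linarith
  have h := rpow_one_add_le_one_add_mul_self hs hθ0 hθ1
  have hx : x = y * (1 + (x - y) / y) := by field_simp; ring
  have hxθ : x ^ θ = y ^ θ * (1 + (x - y) / y) ^ θ := by
    rw [← Real.mul_rpow hy.le (by linarith [div_nonneg (sub_nonneg.2 hxy) hy.le]), ← hx]
  have hyθ : y ^ θ * ((x - y) / y) = y ^ (θ - 1) * (x - y) := by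
    rw [Real.rpow_sub hy, Real.rpow_one]
    field_simp
  calc x ^ θ - y ^ θ = y ^ θ * (1 + (x - y) / y) ^ θ - y ^ θ := by rw [hxθ]
    _ ≤ y ^ θ * (1 + θ * ((x - y) / y)) - y ^ θ := by
        have := Real.rpow_nonneg hy.le θ
        nlinarith
    _ = θ * (y ^ θ * ((x - y) / y)) := by ring
    _ = θ * y ^ (θ - 1) * (x - y) := by rw [hyθ]; ring

lemma convex_bound {x y θ : ℝ} (hx : 0 < x) (hy : 0 ≤ y) (hxy : y ≤ x) (hθ : 1 ≤ θ) :
    x ^ θ - y ^ θ ≤ θ * x ^ (θ - 1) * (x - y) := by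
  have hs : (-1:ℝ) ≤ (y - x) / x := by
    rw [neg_le, ← sub_nonneg]
    have : (y - x)/x ≥ -1 := by
      rw [ge_iff_le, neg_le, neg_div' , neg_sub]
      exact div_le_one_of_le₀ (by linarith) hx.le
    linarith
  have h := one_add_mul_self_le_rpow_one_add hs hθ
  have hyeq : y = x * (1 + (y - x) / x) := by field_simp; ring
  have hyθ : y ^ θ = x ^ θ * (1 + (y - x) / x) ^ θ := by
    rw [← Real.mul_rpow hx.le (by linarith), ← hyeq]
  have hxθ : x ^ θ * ((y - x) / x) = x ^ (θ - 1) * (y - x) := by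
    rw [Real.rpow_sub hx, Real.rpow_one]
    field_simp
  have h2 : x ^ θ * (1 + θ * ((y - x) / x)) ≤ y ^ θ := by
    rw [hyθ]
    have := Real.rpow_nonneg hx.le θ
    nlinarith
  have h3 : x ^ θ + θ * (x ^ (θ - 1) * (y - x)) ≤ y ^ θ := by
    calc x ^ θ + θ * (x ^ (θ - 1) * (y - x)) = x ^ θ * (1 + θ * ((y - x) / x)) := by
          rw [← hxθ]; ring
      _ ≤ y ^ θ := h2
  nlinarith

lemma keyA {θ β ε d : ℝ} (hθ0 : 0 < θ) (hθ1 : θ < 1) (hβ0 : 0 < β) (hβ1 : β < 1)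
    (hε : 0 < ε) (hεd : ε < d) :
    d ^ θ - (d - ε) ^ θ ≤ 2 * ε ^ β * d ^ (θ - β) := by
  have hd : 0 < d := hε.trans hεd
  have hεβ : 0 ≤ ε ^ β := Real.rpow_nonneg hε.le β
  have hdθβ : 0 ≤ d ^ (θ - β) := Real.rpow_nonneg hd.le _
  rcases le_or_gt d (2 * ε) with h | h
  · have h1 : d ^ θ - (d - ε) ^ θ ≤ d ^ θ :=
      sub_le_self _ (Real.rpow_nonneg (by linarith) θ)
    have h2 : d ^ θ = d ^ β * d ^ (θ - β) := by
      rw [← Real.rpow_add hd]; ring_nf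
    have h3 : d ^ β ≤ (2 * ε) ^ β := Real.rpow_le_rpow hd.le h hβ0.le
    have h4 : (2 * ε) ^ β = 2 ^ β * ε ^ β := Real.mul_rpow (by norm_num) hε.le
    have h5 : (2:ℝ) ^ β ≤ 2 := by
      calc (2:ℝ) ^ β ≤ 2 ^ (1:ℝ) := Real.rpow_le_rpow_of_exponent_le one_le_two hβ1.le
        _ = 2 := Real.rpow_one 2
    calc d ^ θ - (d - ε) ^ θ ≤ d ^ β * d ^ (θ - β) := by rw [← h2]; exact h1
      _ ≤ (2 ^ β * ε ^ β) * d ^ (θ - β) := by rw [← h4]; gcongr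
      _ ≤ (2 * ε ^ β) * d ^ (θ - β) := by gcongr
      _ = 2 * ε ^ β * d ^ (θ - β) := by ring
  · -- 2ε < d
    have hde : d / 2 ≤ d - ε := by linarith
    have hde1 : 0 ≤ (d - ε) ^ (θ - 1) := Real.rpow_nonneg (by linarith) _
    have hd1 : 0 ≤ d ^ (θ - 1) := Real.rpow_nonneg hd.le _
    have h1 : d ^ θ - (d - ε) ^ θ ≤ θ * (d - ε) ^ (θ - 1) * ε := by
      have := concave_bound (x := d) (y := d - ε) (by linarith) (by linarith) hθ0.le hθ1.le
      simpa using this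
    have h2 : (d - ε) ^ (θ - 1) ≤ (d / 2) ^ (θ - 1) :=
      Real.rpow_le_rpow_of_nonpos (by linarith) hde (by linarith)
    have h3 : (d / 2) ^ (θ - 1) ≤ 2 * d ^ (θ - 1) := by
      rw [Real.div_rpow hd.le (by norm_num)]
      rw [div_le_iff₀ (Real.rpow_pos_of_pos (by norm_num) _)]
      have hgl : (1/2:ℝ) ≤ 2 ^ (θ - 1) := by
        have h2m : (2:ℝ) ^ (-1:ℝ) ≤ 2 ^ (θ - 1) :=
          Real.rpow_le_rpow_of_exponent_le one_le_two (by linarith)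
        rwa [Real.rpow_neg_one, (by norm_num : ((2:ℝ))⁻¹ = 1/2)] at h2m
      nlinarith [mul_le_mul_of_nonneg_left hgl (by positivity : (0:ℝ) ≤ 2 * d ^ (θ - 1))]
    have h4 : ε * d ^ (θ - 1) ≤ ε ^ β * d ^ (θ - β) := by
      have e1 : ε = ε ^ β * ε ^ (1 - β) := by
        rw [← Real.rpow_add hε]; ring_nf; rw [Real.rpow_one]
      have e2 : ε ^ (1 - β) ≤ d ^ (1 - β) :=
        Real.rpow_le_rpow hε.le (by linarith) (by linarith)
      have e3 : d ^ (1 - β) * d ^ (θ - 1) = d ^ (θ - β) := by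
        rw [← Real.rpow_add hd]; ring_nf
      calc ε * d ^ (θ - 1) = ε ^ β * (ε ^ (1 - β) * d ^ (θ - 1)) := by
            nth_rewrite 1 [e1]; ring
        _ ≤ ε ^ β * (d ^ (1 - β) * d ^ (θ - 1)) := by gcongr
        _ = ε ^ β * d ^ (θ - β) := by rw [e3]
    calc d ^ θ - (d - ε) ^ θ ≤ θ * (d - ε) ^ (θ - 1) * ε := h1
      _ ≤ 1 * (2 * d ^ (θ - 1)) * ε := by gcongr; exact h2.trans h3
      _ = 2 * (ε * d ^ (θ - 1)) := by ring
      _ ≤ 2 * (ε ^ β * d ^ (θ - β)) := by gcongr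
      _ = 2 * ε ^ β * d ^ (θ - β) := by ring

lemma keyB {θ β ε r : ℝ} (hθ0 : 0 < θ) (hβ0 : 0 < β) (hβ1 : β < 1) (hε : 0 < ε) (hr : 0 < r) :
    (r + ε) ^ θ - r ^ θ ≤ (2 + 2 * θ) * ε ^ β * (r + ε) ^ (θ - β) := by
  have hrε : 0 < r + ε := by linarith
  have hεβ : 0 ≤ ε ^ β := Real.rpow_nonneg hε.le β
  have hp : 0 ≤ (r + ε) ^ (θ - β) := Real.rpow_nonneg hrε.le _
  have hq : 0 ≤ (r + ε) ^ (θ - 1) := Real.rpow_nonneg hrε.le _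
  have main : (r + ε) ^ θ - r ^ θ ≤ (2 + 2 * θ) * (ε ^ β * (r + ε) ^ (θ - β)) := by
    rcases le_or_gt r ε with h | h
    · have h1 : (r + ε) ^ θ - r ^ θ ≤ (r + ε) ^ θ :=
        sub_le_self _ (Real.rpow_nonneg hr.le θ)
      have h2 : (r + ε) ^ θ = (r + ε) ^ β * (r + ε) ^ (θ - β) := by
        rw [← Real.rpow_add hrε]; ring_nf
      have h3 : (r + ε) ^ β ≤ (2 * ε) ^ β := Real.rpow_le_rpow hrε.le (by linarith) hβ0.le
      have h4 : (2 * ε) ^ β = 2 ^ β * ε ^ β := Real.mul_rpow (by norm_num) hε.le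
      have h5 : (2:ℝ) ^ β ≤ 2 := by
        calc (2:ℝ) ^ β ≤ 2 ^ (1:ℝ) := Real.rpow_le_rpow_of_exponent_le one_le_two hβ1.le
          _ = 2 := Real.rpow_one 2
      calc (r + ε) ^ θ - r ^ θ ≤ (r + ε) ^ β * (r + ε) ^ (θ - β) := by rw [← h2]; exact h1
        _ ≤ (2 ^ β * ε ^ β) * (r + ε) ^ (θ - β) := by rw [← h4]; gcongr
        _ ≤ (2 * ε ^ β) * (r + ε) ^ (θ - β) := by gcongr
        _ = 2 * (ε ^ β * (r + ε) ^ (θ - β)) := by ring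
        _ ≤ (2 + 2 * θ) * (ε ^ β * (r + ε) ^ (θ - β)) := by
            have : 0 ≤ ε ^ β * (r + ε) ^ (θ - β) := mul_nonneg hεβ hp
            nlinarith
    · -- ε < r
      have key : (r + ε) ^ θ - r ^ θ ≤ 2 * θ * ((r + ε) ^ (θ - 1) * ε) := by
        rcases le_total θ 1 with hθ1 | hθ1
        · have h1 : (r + ε) ^ θ - r ^ θ ≤ θ * r ^ (θ - 1) * ε := by
            have := concave_bound (x := r + ε) (y := r) hr (by linarith) hθ0.le hθ1
            simpa using this
          have h2 : r ^ (θ - 1) ≤ ((r + ε) / 2) ^ (θ - 1) :=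
            Real.rpow_le_rpow_of_nonpos (by positivity) (by linarith) (by linarith)
          have h3 : ((r + ε) / 2) ^ (θ - 1) ≤ 2 * (r + ε) ^ (θ - 1) := by
            rw [Real.div_rpow hrε.le (by norm_num)]
            rw [div_le_iff₀ (Real.rpow_pos_of_pos (by norm_num) _)]
            have hgl : (1/2:ℝ) ≤ 2 ^ (θ - 1) := by
              have h2m : (2:ℝ) ^ (-1:ℝ) ≤ 2 ^ (θ - 1) :=
                Real.rpow_le_rpow_of_exponent_le one_le_two (by linarith)
              rwa [Real.rpow_neg_one, (by norm_num : ((2:ℝ))⁻¹ = 1/2)] at h2m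
            nlinarith [mul_le_mul_of_nonneg_left hgl
              (by positivity : (0:ℝ) ≤ 2 * (r + ε) ^ (θ - 1))]
          calc (r + ε) ^ θ - r ^ θ ≤ θ * r ^ (θ - 1) * ε := h1
            _ ≤ θ * (2 * (r + ε) ^ (θ - 1)) * ε := by gcongr; exact h2.trans h3
            _ = 2 * θ * ((r + ε) ^ (θ - 1) * ε) := by ring
        · have h1 : (r + ε) ^ θ - r ^ θ ≤ θ * (r + ε) ^ (θ - 1) * ε := by
            have := convex_bound (x := r + ε) (y := r) hrε hr.le (by linarith) hθ1
            simpa using this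
          calc (r + ε) ^ θ - r ^ θ ≤ θ * (r + ε) ^ (θ - 1) * ε := h1
            _ ≤ 2 * θ * ((r + ε) ^ (θ - 1) * ε) := by nlinarith [mul_nonneg (mul_nonneg hθ0.le hq) hε.le]
      have h4 : (r + ε) ^ (θ - 1) * ε ≤ ε ^ β * (r + ε) ^ (θ - β) := by
        have e1 : ε = ε ^ β * ε ^ (1 - β) := by
          rw [← Real.rpow_add hε]; ring_nf; rw [Real.rpow_one]
        have e2 : ε ^ (1 - β) ≤ (r + ε) ^ (1 - β) :=
          Real.rpow_le_rpow hε.le (by linarith) (by linarith)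
        have e3 : (r + ε) ^ (1 - β) * (r + ε) ^ (θ - 1) = (r + ε) ^ (θ - β) := by
          rw [← Real.rpow_add hrε]; ring_nf
        calc (r + ε) ^ (θ - 1) * ε = ε * (r + ε) ^ (θ - 1) := by ring
          _ = ε ^ β * (ε ^ (1 - β) * (r + ε) ^ (θ - 1)) := by
              nth_rewrite 1 [e1]; ring
          _ ≤ ε ^ β * ((r + ε) ^ (1 - β) * (r + ε) ^ (θ - 1)) := by gcongr
          _ = ε ^ β * (r + ε) ^ (θ - β) := by rw [e3]
      calc (r + ε) ^ θ - r ^ θ ≤ 2 * θ * ((r + ε) ^ (θ - 1) * ε) := key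
        _ ≤ 2 * θ * (ε ^ β * (r + ε) ^ (θ - β)) := by
            have h2θ : 0 ≤ 2 * θ := by linarith
            exact mul_le_mul_of_nonneg_left h4 h2θ
        _ ≤ (2 + 2 * θ) * (ε ^ β * (r + ε) ^ (θ - β)) := by
            have : 0 ≤ ε ^ β * (r + ε) ^ (θ - β) := mul_nonneg hεβ hp
            nlinarith
  calc (r + ε) ^ θ - r ^ θ ≤ (2 + 2 * θ) * (ε ^ β * (r + ε) ^ (θ - β)) := main
    _ = (2 + 2 * θ) * ε ^ β * (r + ε) ^ (θ - β) := by ring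

lemma integrable_left (a b s t : ℝ) (ha : -1 < a) (ht : 0 < t) (hts : t < s) :
    IntervalIntegrable (fun u => u ^ a * (s - u) ^ b) volume 0 t := by
  apply (intervalIntegral.intervalIntegrable_rpow' ha).mul_continuousOn
  apply ContinuousOn.rpow_const (by fun_prop)
  intro x hx
  rw [Set.uIcc_of_le ht.le] at hx
  left; intro hc; nlinarith [hx.2]

lemma R_eq (a b s t : ℝ) (ha : -1 < a) (hb : -1 < b) (ht : 0 < t) (hts : t < s) :
    R a b s t = (1 / (2 * Beta (a + 1) (b + 1))) *
      ((∫ u in (0:ℝ)..t, u ^ a * (s - u) ^ b) + t ^ (a + b + 1) * Beta (a + 1) (b + 1)) := by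
  unfold R
  rw [min_eq_right hts.le]
  congr 1
  have hi1 := integrable_left a b s t ha ht hts
  have hi2 := integrable_beta a b t ha hb ht
  calc ∫ u in (0:ℝ)..t, u ^ a * ((s - u) ^ b + (t - u) ^ b)
      = ∫ u in (0:ℝ)..t, (u ^ a * (s - u) ^ b + u ^ a * (t - u) ^ b) := by
        congr 1; funext u; ring
    _ = (∫ u in (0:ℝ)..t, u ^ a * (s - u) ^ b) + ∫ u in (0:ℝ)..t, u ^ a * (t - u) ^ b :=
        intervalIntegral.integral_add hi1 hi2
    _ = (∫ u in (0:ℝ)..t, u ^ a * (s - u) ^ b) + t ^ (a + b + 1) * Beta (a + 1) (b + 1) := by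
        rw [integral_beta_scaled a b t ha hb ht]

theorem stmt_18 (a b β : ℝ) (ha : -1 < a) (hb0 : -1 < b) (hb1 : b < 0) (hb2 : |b| < 1 + a)
    (hβ1 : 1 + b < β) (hβ2 : β < 1) :
    ∃ C > (0:ℝ), ∀ r ε s : ℝ, 0 < r → 0 < ε → r + ε < s →
      0 ≤ R a b s (r + ε) - R a b s r ∧
        R a b s (r + ε) - R a b s r ≤
          C * ε ^ β *
            (max (r ^ a) (s ^ a) * (s - r) ^ (1 + b - β) + (r + ε) ^ (1 + a + b - β)) := by
  have habs : -b < 1 + a := by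
    rw [abs_of_neg hb1] at hb2; exact hb2
  have hΘ : 0 < a + b + 1 := by linarith
  set K := Beta (a + 1) (b + 1) with hKdef
  have hK : 0 < K := Beta_pos (by linarith) (by linarith)
  have hb1' : 0 < b + 1 := by linarith
  have hβ0 : 0 < β := by linarith
  refine ⟨1 / (K * (b + 1)) + (1 + (a + b + 1)), by positivity, ?_⟩
  intro r ε s hr hε hrs
  set C := 1 / (K * (b + 1)) + (1 + (a + b + 1)) with hCdef
  have hrε : 0 < r + ε := by linarith
  have hs : 0 < s := by linarith
  have hd : 0 < s - r := by linarith
  have hdε : 0 < s - r - ε := by linarith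
  -- integrability
  have hfull : IntervalIntegrable (fun u => u ^ a * (s - u) ^ b) volume 0 (r + ε) :=
    integrable_left a b s (r + ε) ha hrε hrs
  have hi0r : IntervalIntegrable (fun u => u ^ a * (s - u) ^ b) volume 0 r :=
    hfull.mono_set (by rw [Set.uIcc_of_le hr.le, Set.uIcc_of_le hrε.le]; exact Set.Icc_subset_Icc le_rfl (by linarith))
  have hirr : IntervalIntegrable (fun u => u ^ a * (s - u) ^ b) volume r (r + ε) :=
    hfull.mono_set (by rw [Set.uIcc_of_le (by linarith : r ≤ r + ε), Set.uIcc_of_le hrε.le]; exact Set.Icc_subset_Icc hr.le le_rfl)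
  have hsplit : (∫ u in (0:ℝ)..r, u ^ a * (s - u) ^ b) + (∫ u in r..(r + ε), u ^ a * (s - u) ^ b)
      = ∫ u in (0:ℝ)..(r + ε), u ^ a * (s - u) ^ b :=
    intervalIntegral.integral_add_adjacent_intervals hi0r hirr
  set T1 := ∫ u in r..(r + ε), u ^ a * (s - u) ^ b with hT1def
  set T2 := (r + ε) ^ (a + b + 1) - r ^ (a + b + 1) with hT2def
  have e1 := R_eq a b s (r + ε) ha hb0 hrε hrs
  have e2 := R_eq a b s r ha hb0 hr (by linarith)
  have hdiff : R a b s (r + ε) - R a b s r = (1 / (2 * K)) * (T1 + K * T2) := by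
    rw [e1, e2, ← hsplit, hT2def, hT1def]; ring
  -- nonnegativity
  have hT1nn : 0 ≤ T1 := by
    apply intervalIntegral.integral_nonneg (by linarith : r ≤ r + ε)
    intro u hu
    have h1 : 0 ≤ u := le_trans hr.le hu.1
    have h2 : 0 ≤ s - u := by linarith [hu.2]
    positivity
  have hT2nn : 0 ≤ T2 := by
    rw [hT2def, sub_nonneg]
    exact Real.rpow_le_rpow hr.le (by linarith) hΘ.le
  constructor
  · rw [hdiff]
    have : 0 ≤ T1 + K * T2 := by positivity
    positivity
  -- upper bound
  set M := max (r ^ a) (s ^ a) with hMdef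
  have hM : 0 < M := lt_max_of_lt_left (Real.rpow_pos_of_pos hr a)
  -- bound T1
  have hmono : T1 ≤ M * ((s - r) ^ (b + 1) - (s - r - ε) ^ (b + 1)) / (b + 1) := by
    have hgint : IntervalIntegrable (fun u => M * (s - u) ^ b) volume r (r + ε) := by
      apply ContinuousOn.intervalIntegrable
      apply ContinuousOn.mul continuousOn_const
      apply ContinuousOn.rpow_const (by fun_prop)
      intro x hx
      rw [Set.uIcc_of_le (by linarith : r ≤ r + ε)] at hx
      left; intro hc; nlinarith [hx.2]
    have hle : T1 ≤ ∫ u in r..(r + ε), M * (s - u) ^ b := by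
      apply intervalIntegral.integral_mono_on (by linarith : r ≤ r + ε) hirr hgint
      intro u hu
      have hu0 : 0 < u := lt_of_lt_of_le hr hu.1
      have hsu : 0 ≤ s - u := by linarith [hu.2]
      have hua : u ^ a ≤ M := by
        rcases le_or_gt 0 a with hc | hc
        · exact le_trans (Real.rpow_le_rpow hu0.le (by linarith [hu.2]) hc) (le_max_right _ _)
        · exact le_trans (Real.rpow_le_rpow_of_nonpos hr hu.1 hc.le) (le_max_left _ _)
      exact mul_le_mul_of_nonneg_right hua (Real.rpow_nonneg hsu b)
    have hval : ∫ u in r..(r + ε), M * (s - u) ^ b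
        = M * ((s - r) ^ (b + 1) - (s - r - ε) ^ (b + 1)) / (b + 1) := by
      rw [intervalIntegral.integral_const_mul]
      rw [intervalIntegral.integral_comp_sub_left (fun x => x ^ b) s]
      rw [integral_rpow (Or.inl hb0)]
      rw [show s - (r + ε) = s - r - ε by ring]
      ring
    linarith [hval ▸ hle]
  have hkeyA : (s - r) ^ (b + 1) - (s - r - ε) ^ (b + 1) ≤ 2 * ε ^ β * (s - r) ^ (1 + b - β) := by
    have := keyA (θ := b + 1) (β := β) (ε := ε) (d := s - r) hb1' (by linarith) hβ0 hβ2 hε (by linarith)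
    rwa [show s - r - ε = s - r - ε from rfl, show b + 1 - β = 1 + b - β by ring] at this
  have hkeyB : T2 ≤ (2 + 2 * (a + b + 1)) * ε ^ β * (r + ε) ^ (1 + a + b - β) := by
    have := keyB (θ := a + b + 1) (β := β) (ε := ε) (r := r) hΘ hβ0 hβ2 hε hr
    rwa [show a + b + 1 - β = 1 + a + b - β by ring] at this
  have hεβ : 0 ≤ ε ^ β := Real.rpow_nonneg hε.le β
  have hP1 : 0 ≤ (s - r) ^ (1 + b - β) := Real.rpow_nonneg hd.le _
  have hP2 : 0 ≤ (r + ε) ^ (1 + a + b - β) := Real.rpow_nonneg hrε.le _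
  rw [hdiff]
  have step1 : (1 / (2 * K)) * (T1 + K * T2)
      ≤ (1 / (2 * K)) * ((M * (2 * ε ^ β * (s - r) ^ (1 + b - β)) / (b + 1))
          + K * ((2 + 2 * (a + b + 1)) * ε ^ β * (r + ε) ^ (1 + a + b - β))) := by
    apply mul_le_mul_of_nonneg_left _ (by positivity)
    apply add_le_add
    · calc T1 ≤ M * ((s - r) ^ (b + 1) - (s - r - ε) ^ (b + 1)) / (b + 1) := hmono
        _ ≤ M * (2 * ε ^ β * (s - r) ^ (1 + b - β)) / (b + 1) := by
            have h1 := mul_le_mul_of_nonneg_left hkeyA hM.le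
            exact (div_le_div_iff_of_pos_right hb1').mpr h1
    · exact mul_le_mul_of_nonneg_left hkeyB hK.le
  refine le_trans step1 ?_
  have algebra : (1 / (2 * K)) * ((M * (2 * ε ^ β * (s - r) ^ (1 + b - β)) / (b + 1))
          + K * ((2 + 2 * (a + b + 1)) * ε ^ β * (r + ε) ^ (1 + a + b - β)))
      = (1 / (K * (b + 1))) * (ε ^ β * (M * (s - r) ^ (1 + b - β)))
        + (1 + (a + b + 1)) * (ε ^ β * (r + ε) ^ (1 + a + b - β)) := by
    field_simp
  rw [algebra]
  have hc1 : (1 / (K * (b + 1))) ≤ C := by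
    rw [hCdef]; linarith
  have hc2 : (1 + (a + b + 1)) ≤ C := by
    have : 0 < 1 / (K * (b + 1)) := by positivity
    rw [hCdef]; linarith
  calc (1 / (K * (b + 1))) * (ε ^ β * (M * (s - r) ^ (1 + b - β)))
        + (1 + (a + b + 1)) * (ε ^ β * (r + ε) ^ (1 + a + b - β))
      ≤ C * (ε ^ β * (M * (s - r) ^ (1 + b - β))) + C * (ε ^ β * (r + ε) ^ (1 + a + b - β)) :=
        add_le_add
          (mul_le_mul_of_nonneg_right hc1 (mul_nonneg hεβ (mul_nonneg hM.le hP1)))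
          (mul_le_mul_of_nonneg_right hc2 (mul_nonneg hεβ hP2))
    _ = C * ε ^ β * (M * (s - r) ^ (1 + b - β) + (r + ε) ^ (1 + a + b - β)) := by ring
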